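/- For n > 3, let U be any word of the same type as U_n = x_1 x_2 ··· x_{n²} · J_n · x_{n²} ··· x_2 x_1, where J_n = (x_1 x_{1+n} ··· x_{1+n²−n})(x_2 x_{2+n} ··· x_{2+n²−n})···(x_n x_{2n} ··· x_{n²}). Then for each 1 ≤ i ≤ n², between any two distinct islands formed by x_i in U there occur at least n pairwise distinct variables. -/

import Mathlib

/-- Two words have the same type: equal up to changing the positive exponents of
their maximal single-letter blocks. -/
def SameType {α : Type*} (u v : List α) : Prop :=
  ∃ L : List (α × ℕ × ℕ),
    (∀ p ∈ L, 0 < p.2.1 ∧ 0 < p.2.2) ∧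
    List.Chain' (fun p q => p.1 ≠ q.1) L ∧
    u = L.flatMap (fun p => List.replicate p.2.1 p.1) ∧
    v = L.flatMap (fun p => List.replicate p.2.2 p.1)

/-- The height of a word: the number of islands (maximal one-letter power factors). -/
def height {α : Type*} [DecidableEq α] (u : List α) : ℕ :=
  (u.destutter (· ≠ ·)).length

/-- A monoid M satisfies the identity u ≈ v (words in countably many variables). -/
def SatM (M : Type*) [Monoid M] (u v : List ℕ) : Prop :=
  ∀ θ : ℕ → M, (u.map θ).prod = (v.map θ).prod

/-- Property (C_ℓ): every word over a two-letter alphabet {x,y} of height at most ℓ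
can form an identity of M only with a word of the same type. -/
def PropC (M : Type*) [Monoid M] (ℓ : ℕ) : Prop :=
  ∀ x y : ℕ, x ≠ y → ∀ u v : List ℕ, u ≠ [] → (∀ z ∈ u, z = x ∨ z = y) →
    height u ≤ ℓ → SatM M u v → SameType u v

/-- The Jackson word J_n = (x₁x_{1+n}⋯x_{1+n²−n})(x₂x_{2+n}⋯x_{2+n²−n})⋯(x_nx_{2n}⋯x_{n²}),
with the variable x_i encoded as the natural number i. -/
def Jword (n : ℕ) : List ℕ :=
  (List.range n).flatMap (fun i => (List.range n).map (fun j => i + 1 + j * n))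

/-- The word x₁x₂⋯x_{n²}. -/
def ascWord (n : ℕ) : List ℕ := (List.range (n ^ 2)).map (· + 1)

/-- The word U_n = x₁x₂⋯x_{n²} · J_n · x_{n²}⋯x₂x₁. -/
def Uword (n : ℕ) : List ℕ := ascWord n ++ Jword n ++ (ascWord n).reverse

def getU (n m : ℕ) : ℕ :=
  if m < n*n then m+1 else if m < 2*(n*n) then (m-n*n)/n + 1 + ((m-n*n)%n)*n
  else 3*(n*n) - m

lemma range_mul (a b : ℕ) (f : ℕ → ℕ) :
    (List.range (a*b)).map f
      = (List.range a).flatMap (fun i => (List.range b).map (fun j => f (i*b+j))) := by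
  induction a with
  | zero => simp
  | succ a ih =>
    rw [Nat.succ_mul, List.range_add, List.map_append, ih, List.range_succ,
      List.flatMap_append]
    simp [List.map_map, Function.comp_def]

lemma Jword_eq (n : ℕ) :
    Jword n = (List.range (n*n)).map (fun s => s/n + 1 + (s%n)*n) := by
  rw [Jword, range_mul n n]
  refine List.flatMap_congr (fun r hr => List.map_congr_left (fun j hj => ?_))
  rw [List.mem_range] at hr hj
  have h1 : (r*n+j)/n = r := by
    rw [add_comm, mul_comm, Nat.add_mul_div_left _ _ (by omega), Nat.div_eq_of_lt hj]
    omega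
  have h2 : (r*n+j)%n = j := by
    rw [add_comm, Nat.add_mul_mod_self_right, Nat.mod_eq_of_lt hj]
  rw [h1, h2]

lemma asc_rev (n : ℕ) :
    (ascWord n).reverse = (List.range (n*n)).map (fun t => n*n - t) := by
  have h2 : n^2 = n*n := sq n
  apply List.ext_getElem
  · simp [ascWord, h2]
  · intro m hm hm'
    simp only [ascWord, h2, List.getElem_reverse, List.getElem_map, List.getElem_range,
      List.length_map, List.length_range, List.length_reverse] at hm hm' ⊢
    omega

lemma uword_eq (n : ℕ) : Uword n = (List.range (3*(n*n))).map (getU n) := by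
  have h2 : n^2 = n*n := sq n
  rw [show 3*(n*n) = n*n + (n*n + n*n) by ring]
  simp only [List.range_add, List.map_append, List.map_map]
  rw [Uword, List.append_assoc, Jword_eq, asc_rev]
  congr 1
  · rw [ascWord, h2]
    refine List.map_congr_left (fun m hm => ?_)
    rw [List.mem_range] at hm
    simp only [getU, if_pos hm]
  congr 1
  · refine List.map_congr_left (fun s hs => ?_)
    rw [List.mem_range] at hs
    simp only [Function.comp_apply, getU]
    rw [if_neg (by omega), if_pos (by omega), show n*n+s-n*n = s by omega]
  · refine List.map_congr_left (fun t ht => ?_)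
    rw [List.mem_range] at ht
    simp only [Function.comp_apply, getU]
    rw [if_neg (by omega), if_neg (by omega)]
    omega

lemma occ (n i m : ℕ) (hn : 0 < n) (hi : 1 ≤ i) (hi' : i ≤ n*n)
    (hm : m < 3*(n*n)) (h : getU n m = i) :
    m = i - 1 ∨ m = n*n + ((i-1)%n)*n + (i-1)/n ∨ m = 3*(n*n) - i := by
  unfold getU at h
  split_ifs at h with h1 h2
  · left; omega
  · right; left
    set s := m - n*n with hs
    have hsn : s < n*n := by omega
    have hmod : s % n < n := Nat.mod_lt _ hn
    have hdm : n * (s/n) + s % n = s := Nat.div_add_mod s n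
    have hdlt : s / n < n := Nat.div_lt_iff_lt_mul hn |>.2 (by omega)
    -- h : s/n + 1 + (s%n)*n = i
    have hrep : i - 1 = s/n + (s%n)*n := by omega
    have hq : (i-1)/n = s % n := by
      rw [hrep, mul_comm, Nat.add_mul_div_left _ _ hn, Nat.div_eq_of_lt hdlt, zero_add]
    have hr : (i-1)%n = s / n := by
      rw [hrep, Nat.add_mul_mod_self_right, Nat.mod_eq_of_lt hdlt]
    rw [hq, hr]
    have hfin : (s/n)*n + s%n = s := by rw [mul_comm]; exact hdm
    omega
  · right; right; omega

lemma partB (n i : ℕ) (hn : 3 < n) (hi : 1 ≤ i) (hi' : i ≤ n*n)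
    (v1 v2 v3 : List ℕ) (hfac : Uword n = v1 ++ i :: (v2 ++ i :: v3))
    (hdist : ∃ c ∈ v2, c ≠ i) : n ≤ v2.toFinset.card := by
  have hn0 : 0 < n := by omega
  have hnn : n ≤ n*n := Nat.le_mul_of_pos_left n hn0
  obtain ⟨a, ha⟩ : ∃ t, t = v1.length := ⟨_, rfl⟩
  obtain ⟨b, hb⟩ : ∃ t, t = v2.length := ⟨_, rfl⟩
  have hlen : a + (b + 1 + (v3.length + 1)) = 3*(n*n) := by
    have h0 := congrArg List.length hfac
    rw [uword_eq] at h0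
    simp only [List.length_map, List.length_range, List.length_append,
      List.length_cons] at h0
    omega
  have hget : ∀ m, m < 3*(n*n) → (Uword n)[m]? = some (getU n m) := by
    intro m hm
    rw [uword_eq, List.getElem?_map, List.getElem?_range hm, Option.map_some]
  have hga : getU n a = i := by
    have h1 : (Uword n)[a]? = some i := by
      rw [hfac, ha, List.getElem?_append_right (le_refl _), Nat.sub_self,
        List.getElem?_cons_zero]
    rw [hget a (by omega)] at h1
    exact Option.some.inj h1
  have hgsec : getU n (a + (b+1)) = i := by
    have h1 : (Uword n)[a + (b+1)]? = some i := by
      rw [hfac, List.getElem?_append_right (by omega : v1.length ≤ a + (b+1)),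
        show a + (b+1) - v1.length = b + 1 by omega, List.getElem?_cons_succ,
        List.getElem?_append_right (by omega : v2.length ≤ b), Nat.sub_eq_zero_of_le (by omega),
        List.getElem?_cons_zero]
    rw [hget _ (by omega)] at h1
    exact Option.some.inj h1
  have hmem : ∀ m, a < m → m < a + (b+1) → getU n m ∈ v2 := by
    intro m h1 h2
    have e1 : (Uword n)[m]? = some (getU n m) := hget m (by omega)
    rw [hfac, List.getElem?_append_right (by omega : v1.length ≤ m),
      show m - v1.length = (m - (a+1)) + 1 by omega, List.getElem?_cons_succ,
      List.getElem?_append, if_pos (by omega : m - (a+1) < v2.length)] at e1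
    exact List.mem_of_getElem? e1
  have hval1 : ∀ m, m < n*n → getU n m = m + 1 := by
    intro m hm; simp only [getU]; rw [if_pos hm]
  have hval2 : ∀ s, s < n*n → getU n (n*n + s) = s/n + 1 + (s%n)*n := by
    intro s hs; simp only [getU]
    rw [if_neg (by omega), if_pos (by omega), show n*n+s-n*n = s by omega]
  have hval3 : ∀ m, 2*(n*n) ≤ m → m < 3*(n*n) → getU n m = 3*(n*n) - m := by
    intro m h1 h2; simp only [getU]; rw [if_neg (by omega), if_neg (by omega)]
  obtain ⟨q, hqdef⟩ : ∃ t, t = (i-1)/n := ⟨_, rfl⟩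
  obtain ⟨r, hrdef⟩ : ∃ t, t = (i-1)%n := ⟨_, rfl⟩
  have hqr : n*q + r = i - 1 := by rw [hqdef, hrdef]; exact Nat.div_add_mod _ _
  have hrn : r < n := by rw [hrdef]; exact Nat.mod_lt _ hn0
  have hqn : q < n := by rw [hqdef]; exact (Nat.div_lt_iff_lt_mul hn0).2 (by omega)
  have hrnn : r*n + n ≤ n*n := by
    have h1 := Nat.mul_le_mul_right n (show r+1 ≤ n by omega)
    calc r*n + n = (r+1)*n := by ring
    _ ≤ n*n := h1
  have hqnn : q*n + n ≤ n*n := by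
    have h1 := Nat.mul_le_mul_right n (show q+1 ≤ n by omega)
    calc q*n + n = (q+1)*n := by ring
    _ ≤ n*n := h1
  have hocc1 := occ n i a hn0 hi hi' (by omega) hga
  have hocc2 := occ n i (a+(b+1)) hn0 hi hi' (by omega) hgsec
  rw [← hqdef, ← hrdef] at hocc1 hocc2
  have hqhigh : n*n < i + n → n*q + n = n*n ∧ q = n - 1 := by
    intro hhi
    have h3 : n*(n-1) + n = n*n := by
      calc n*(n-1) + n = n*((n-1)+1) := by ring
      _ = n*n := by rw [show n-1+1 = n by omega]
    have hq1 : q = n - 1 := by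
      rcases Nat.lt_or_ge q (n-1) with h|h
      · exfalso
        have h2 : n*q + n ≤ n*(n-1) := by
          have h4 := Nat.mul_le_mul_left n (show q+1 ≤ n-1 by omega)
          calc n*q + n = n*(q+1) := by ring
          _ ≤ n*(n-1) := h4
        omega
      · omega
    exact ⟨by rw [hq1]; exact h3, hq1⟩
  have main : ∀ φ : ℕ → ℕ, (∀ j, j < n → φ j ∈ v2) →
      (∀ j j', j < n → j' < n → φ j = φ j' → j = j') → n ≤ v2.toFinset.card := by
    intro φ h1 h2
    have h3 := Finset.card_le_card_of_injOn (s := Finset.range n) (t := v2.toFinset) φ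
      (fun j hj => List.mem_toFinset.2 (h1 j (Finset.mem_range.1 hj)))
      (fun j hj j' hj' hjj => h2 j j' (Finset.mem_range.1 (by simpa using hj))
        (Finset.mem_range.1 (by simpa using hj')) hjj)
    simpa using h3
  have hp2lt : n*n + r*n + q < 2*(n*n) := by omega
  rcases hocc1 with h1 | h1 | h1
  · -- first occurrence at i - 1
    have hsec : n*n + r*n + q ≤ a + (b+1) := by
      rcases hocc2 with h2|h2|h2 <;> omega
    by_cases hlow : i + n ≤ n*n
    · refine main (fun j => i + j + 1) (fun j hj => ?_) (fun j j' _ _ e => ?_)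
      · show i + j + 1 ∈ v2
        have h3 := hmem (i+j) (by omega) (by omega)
        rwa [hval1 _ (by omega)] at h3
      · have e' : i + j + 1 = i + j' + 1 := e
        omega
    · obtain ⟨hql, hq1⟩ := hqhigh (by omega)
      by_cases hr1 : 1 ≤ r
      · have hrg : n ≤ r*n := by
          have h4 := Nat.mul_le_mul_right n hr1; simpa using h4
        refine main (fun j => 1 + j*n) (fun j hj => ?_) (fun j j' _ _ e => ?_)
        · show 1 + j*n ∈ v2
          have h3 := hmem (n*n+j) (by omega) (by omega)
          rw [hval2 j (by omega), Nat.div_eq_of_lt (by omega),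
            Nat.mod_eq_of_lt (by omega), Nat.zero_add] at h3
          exact h3
        · have e' : 1 + j*n = 1 + j'*n := e
          exact Nat.eq_of_mul_eq_mul_right hn0 (by omega)
      · have hr0 : r = 0 := by omega
        have hrn0 : r*n = 0 := by rw [hr0]; ring
        have h2n : (n-2)*n + 2*n = n*n := by
          calc (n-2)*n + 2*n = ((n-2)+2)*n := by ring
          _ = n*n := by rw [show n-2+2 = n by omega]
        refine main (fun j => if j+1 < n then 1 + j*n else n*n)
          (fun j hj => ?_) (fun j j' hj hj' e => ?_)
        · show (if j+1 < n then 1 + j*n else n*n) ∈ v2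
          by_cases hcase : j+1 < n
          · rw [if_pos hcase]
            have h3 := hmem (n*n+j) (by omega) (by omega)
            rw [hval2 j (by omega), Nat.div_eq_of_lt (by omega),
              Nat.mod_eq_of_lt (by omega), Nat.zero_add] at h3
            exact h3
          · rw [if_neg hcase]
            have h3 := hmem (n*n - 1) (by omega) (by omega)
            rw [hval1 _ (by omega), show n*n - 1 + 1 = n*n by omega] at h3
            exact h3
        · have e' : (if j+1 < n then 1 + j*n else n*n)
              = (if j'+1 < n then 1 + j'*n else n*n) := e
          by_cases e1 : j+1 < n <;> by_cases e2 : j'+1 < n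
          · rw [if_pos e1, if_pos e2] at e'
            exact Nat.eq_of_mul_eq_mul_right hn0 (by omega)
          · rw [if_pos e1, if_neg e2] at e'
            exfalso
            have h5 : j*n ≤ (n-2)*n := Nat.mul_le_mul_right n (by omega)
            omega
          · rw [if_neg e1, if_pos e2] at e'
            exfalso
            have h5 : j'*n ≤ (n-2)*n := Nat.mul_le_mul_right n (by omega)
            omega
          · omega
  · -- first occurrence in the middle (Jackson) part
    have hsec : a + (b+1) = 3*(n*n) - i := by
      rcases hocc2 with h2|h2|h2 <;> omega
    by_cases hlow : i + n ≤ n*n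
    · refine main (fun j => i + 1 + j) (fun j hj => ?_) (fun j j' _ _ e => ?_)
      · show i + 1 + j ∈ v2
        have h3 := hmem (3*(n*n) - (i+1+j)) (by omega) (by omega)
        rwa [hval3 _ (by omega) (by omega),
          show 3*(n*n) - (3*(n*n) - (i+1+j)) = i+1+j by omega] at h3
      · have e' : i + 1 + j = i + 1 + j' := e
        omega
    · obtain ⟨hql, hq1⟩ := hqhigh (by omega)
      by_cases hr1 : r + 1 < n
      · have hr2n : r*n ≤ (n-2)*n := Nat.mul_le_mul_right n (by omega)
        have h2n : (n-2)*n + 2*n = n*n := by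
          calc (n-2)*n + 2*n = ((n-2)+2)*n := by ring
          _ = n*n := by rw [show n-2+2 = n by omega]
        have hnn1 : n*(n-1) + n = n*n := by
          calc n*(n-1) + n = n*((n-1)+1) := by ring
          _ = n*n := by rw [show n-1+1 = n by omega]
        refine main (fun j => n + j*n) (fun j hj => ?_) (fun j j' _ _ e => ?_)
        · show n + j*n ∈ v2
          have h3 := hmem (n*n + (n*n - n + j)) (by omega) (by omega)
          rw [hval2 _ (by omega), show n*n - n + j = j + n*(n-1) by omega,
            Nat.add_mul_div_left _ _ hn0, Nat.div_eq_of_lt (by omega),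
            Nat.add_mul_mod_self_left, Nat.mod_eq_of_lt (by omega),
            Nat.zero_add, show n-1+1 = n by omega] at h3
          exact h3
        · have e' : n + j*n = n + j'*n := e
          exact Nat.eq_of_mul_eq_mul_right hn0 (by omega)
      · -- i = n*n : the two chosen occurrences are adjacent, contradiction
        exfalso
        have hrval : r = n - 1 := by omega
        have hrnl : r*n + n = n*n := by
          calc r*n + n = (r+1)*n := by ring
          _ = n*n := by rw [show r+1 = n by omega]
        have hiv : i = n*n := by omega
        have hb0 : v2 = [] := List.length_eq_zero_iff.1 (by omega)
        obtain ⟨c, hc, _⟩ := hdist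
        rw [hb0] at hc
        simp at hc
  · -- first occurrence in the reversed part: impossible
    exfalso
    rcases hocc2 with h2|h2|h2 <;> omega

lemma shadow (i : ℕ) (L : List (ℕ × ℕ × ℕ)) (hpos : ∀ p ∈ L, 0 < p.2.1 ∧ 0 < p.2.2) :
    ∀ w w3 : List ℕ,
    L.flatMap (fun p => List.replicate p.2.1 p.1) = w ++ i :: w3 →
    ∃ v v3 : List ℕ, L.flatMap (fun p => List.replicate p.2.2 p.1) = v ++ i :: v3 ∧
      (∀ c ∈ v, c ∈ w) ∧ (∀ c ∈ w, c ≠ i → c ∈ v) := by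
  induction L with
  | nil => intro w w3 h; simp at h
  | cons p L ih =>
    obtain ⟨a, m, k⟩ := p
    have hm : 0 < m := (hpos _ (List.mem_cons_self)).1
    have hk : 0 < k := (hpos _ (List.mem_cons_self)).2
    have ih' := ih (fun p hp => hpos p (List.mem_cons_of_mem _ hp))
    intro w w3 h
    rw [List.flatMap_cons] at h
    dsimp only at h
    have hrep : List.replicate k i = i :: List.replicate (k-1) i := by
      cases k with | zero => omega | succ k' => simp [List.replicate_succ]
    by_cases hle : m ≤ w.length
    · have ht := congrArg (List.take m) h
      have hd := congrArg (List.drop m) h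
      rw [List.take_append, List.take_replicate, min_self,
        List.length_replicate, Nat.sub_self, List.take_zero, List.append_nil,
        List.take_append, Nat.sub_eq_zero_of_le hle, List.take_zero,
        List.append_nil] at ht
      rw [List.drop_append, List.drop_replicate, Nat.sub_self,
        List.replicate_zero, List.length_replicate, Nat.sub_self, List.drop_zero,
        List.nil_append, List.drop_append, Nat.sub_eq_zero_of_le hle,
        List.drop_zero] at hd
      obtain ⟨v', v3, hv, hsub, hcov⟩ := ih' (w.drop m) w3 hd
      refine ⟨List.replicate k a ++ v', v3, ?_, ?_, ?_⟩
      · rw [List.flatMap_cons, hv, List.append_assoc]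
      · intro c hc
        rcases List.mem_append.1 hc with hc | hc
        · have hca := List.eq_of_mem_replicate hc
          have h6 : a ∈ w.take m := by
            rw [← ht]; exact List.mem_replicate.2 ⟨by omega, rfl⟩
          rw [hca]; exact List.mem_of_mem_take h6
        · exact List.mem_of_mem_drop (hsub c hc)
      · intro c hc hci
        have hc2 : c ∈ w.take m ++ w.drop m := by rw [List.take_append_drop]; exact hc
        rcases List.mem_append.1 hc2 with hc3 | hc3
        · rw [← ht] at hc3
          have := List.eq_of_mem_replicate hc3
          exact List.mem_append.2 (Or.inl (this ▸ List.mem_replicate.2 ⟨by omega, rfl⟩))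
        · exact List.mem_append.2 (Or.inr (hcov c hc3 hci))
    · push_neg at hle
      have hai : a = i := by
        have h2 : (List.replicate m a ++ L.flatMap (fun p => List.replicate p.2.1 p.1))[w.length]? = some a := by
          rw [List.getElem?_append, if_pos (by simpa using hle),
            List.getElem?_replicate, if_pos hle]
        rw [h, List.getElem?_append_right (le_refl _), Nat.sub_self,
          List.getElem?_cons_zero] at h2
        exact (Option.some.inj h2).symm
      subst hai
      have hwall : ∀ c ∈ w, c = a := by
        intro c hc
        have ht := congrArg (List.take w.length) h
        rw [List.take_append, List.take_replicate,
          min_eq_left (by omega), List.length_replicate,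
          Nat.sub_eq_zero_of_le (by omega), List.take_zero, List.append_nil,
          List.take_append, Nat.sub_self, List.take_zero,
          List.append_nil, List.take_length] at ht
        rw [← ht] at hc
        exact List.eq_of_mem_replicate hc
      refine ⟨[], List.replicate (k-1) a ++ L.flatMap (fun p => List.replicate p.2.2 p.1),
        ?_, by simp, fun c hc hci => absurd (hwall c hc) hci⟩
      rw [List.flatMap_cons, List.nil_append]
      dsimp only
      rw [hrep, List.cons_append]

lemma transfer (i : ℕ) (L : List (ℕ × ℕ × ℕ)) (hpos : ∀ p ∈ L, 0 < p.2.1 ∧ 0 < p.2.2) :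
    ∀ w1 w2 w3 : List ℕ,
    L.flatMap (fun p => List.replicate p.2.1 p.1) = w1 ++ i :: (w2 ++ i :: w3) →
    (∃ c ∈ w2, c ≠ i) →
    ∃ v1 v2 v3 : List ℕ,
      L.flatMap (fun p => List.replicate p.2.2 p.1) = v1 ++ i :: (v2 ++ i :: v3) ∧
      (∃ c ∈ v2, c ≠ i) ∧ (∀ c ∈ v2, c ∈ w2) := by
  induction L with
  | nil => intro w1 w2 w3 h _; simp at h
  | cons p L ih =>
    obtain ⟨a, m, k⟩ := p
    have hm : 0 < m := (hpos _ (List.mem_cons_self)).1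
    have hk : 0 < k := (hpos _ (List.mem_cons_self)).2
    have hpos' : ∀ p ∈ L, 0 < p.2.1 ∧ 0 < p.2.2 :=
      fun p hp => hpos p (List.mem_cons_of_mem _ hp)
    have ih' := ih hpos'
    intro w1 w2 w3 h hdist
    rw [List.flatMap_cons] at h
    dsimp only at h
    by_cases hle : m ≤ w1.length
    · have ht := congrArg (List.take m) h
      have hd := congrArg (List.drop m) h
      rw [List.take_append, List.take_replicate, min_self,
        List.length_replicate, Nat.sub_self, List.take_zero, List.append_nil,
        List.take_append, Nat.sub_eq_zero_of_le hle, List.take_zero,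
        List.append_nil] at ht
      rw [List.drop_append, List.drop_replicate, Nat.sub_self,
        List.replicate_zero, List.length_replicate, Nat.sub_self, List.drop_zero,
        List.nil_append, List.drop_append, Nat.sub_eq_zero_of_le hle,
        List.drop_zero] at hd
      obtain ⟨v1, v2, v3, hv, hd2, hsub⟩ := ih' (w1.drop m) w2 w3 hd hdist
      refine ⟨List.replicate k a ++ v1, v2, v3, ?_, hd2, hsub⟩
      rw [List.flatMap_cons]
      dsimp only
      rw [hv, List.append_assoc]
    · push_neg at hle
      have hai : a = i := by
        have h2 : (List.replicate m a ++ L.flatMap (fun p => List.replicate p.2.1 p.1))[w1.length]? = some a := by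
          rw [List.getElem?_append, if_pos (by simpa using hle),
            List.getElem?_replicate, if_pos hle]
        rw [h, List.getElem?_append_right (le_refl _), Nat.sub_self,
          List.getElem?_cons_zero] at h2
        exact (Option.some.inj h2).symm
      subst hai
      have hrep' : List.replicate k a = List.replicate (k-1) a ++ [a] := by
        cases k with | zero => omega | succ k' => simp [List.replicate_succ']
      have hd := congrArg (List.drop (w1.length+1)) h
      rw [List.drop_append, List.drop_replicate, List.length_replicate,
        Nat.sub_eq_zero_of_le (by omega : w1.length + 1 ≤ m), List.drop_zero,
        List.drop_append, List.drop_eq_nil_of_le (by omega),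
        show w1.length + 1 - w1.length = 1 by omega, List.nil_append,
        show (1:ℕ) = 0 + 1 by omega, List.drop_succ_cons, List.drop_zero] at hd
      by_cases hs : m - (w1.length+1) ≤ w2.length
      · have ht := congrArg (List.take (m - (w1.length+1))) hd
        have hd2 := congrArg (List.drop (m - (w1.length+1))) hd
        rw [List.take_append, List.take_replicate, min_self,
          List.length_replicate, Nat.sub_self, List.take_zero, List.append_nil,
          List.take_append, Nat.sub_eq_zero_of_le hs, List.take_zero,
          List.append_nil] at ht
        rw [List.drop_append, List.drop_replicate, Nat.sub_self,
          List.replicate_zero, List.length_replicate, Nat.sub_self, List.drop_zero,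
          List.nil_append, List.drop_append, Nat.sub_eq_zero_of_le hs,
          List.drop_zero] at hd2
        obtain ⟨v, v3', hv, hsubv, hcov⟩ := shadow a L hpos' _ _ hd2
        refine ⟨List.replicate (k-1) a, v, v3', ?_, ?_,
          fun c hc => List.mem_of_mem_drop (hsubv c hc)⟩
        · rw [List.flatMap_cons]
          dsimp only
          rw [hv, hrep', List.append_assoc, List.singleton_append]
        · obtain ⟨c, hc, hci⟩ := hdist
          have hc2 : c ∈ w2.take (m - (w1.length+1)) ++ w2.drop (m - (w1.length+1)) := by
            rw [List.take_append_drop]; exact hc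
          rcases List.mem_append.1 hc2 with hc3 | hc3
          · rw [← ht] at hc3
            exact absurd (List.eq_of_mem_replicate hc3) hci
          · exact ⟨c, hcov c hc3 hci, hci⟩
      · push_neg at hs
        exfalso
        obtain ⟨c, hc, hci⟩ := hdist
        have ht := congrArg (List.take w2.length) hd
        rw [List.take_append, List.take_replicate,
          min_eq_left (by omega), List.length_replicate,
          Nat.sub_eq_zero_of_le (by omega), List.take_zero, List.append_nil,
          List.take_append, Nat.sub_self, List.take_zero,
          List.append_nil, List.take_length] at ht
        rw [← ht] at hc
        exact absurd (List.eq_of_mem_replicate hc) hci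

/-- (P2) For n > 3, in any word U of the same type as U_n, between any two distinct
islands formed by x_i there occur at least n pairwise distinct variables. -/
theorem stmt18 (n : ℕ) (hn : 3 < n) (U : List ℕ) (hU : SameType U (Uword n))
    (i : ℕ) (hi : 1 ≤ i) (hi' : i ≤ n ^ 2)
    (w1 w2 w3 : List ℕ) (hfac : U = w1 ++ i :: w2 ++ i :: w3)
    (hdist : ∃ c ∈ w2, c ≠ i) :
    n ≤ w2.toFinset.card := by
  obtain ⟨L, hpos, -, hUeq, hVeq⟩ := hU
  have hfac' : L.flatMap (fun p => List.replicate p.2.1 p.1)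
      = w1 ++ i :: (w2 ++ i :: w3) := by rw [← hUeq, hfac]; simp
  obtain ⟨v1, v2, v3, hvfac, hvd, hvsub⟩ := transfer i L hpos w1 w2 w3 hfac' hdist
  have hB := partB n i hn hi (by rw [← sq n]; exact hi') v1 v2 v3
    (by rw [hVeq]; exact hvfac) hvd
  refine le_trans hB (Finset.card_le_card ?_)
  intro c hc
  exact List.mem_toFinset.2 (hvsub c (List.mem_toFinset.1 hc))
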